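/- Let V be a finite-dimensional real inner product space, p and q positive integers, and J : V → V a linear map with J² = p·J + q·id that is self-adjoint: ⟨J x, y⟩ = ⟨x, J y⟩ for all x, y ∈ V. Let W ⊆ V be a subspace, P the orthogonal projection onto W, and define T x = P(J x), N x = (id − P)(J x) for x ∈ W and n u = (id − P)(J u) for u ∈ W⊥. Then for every x ∈ W: p·N x = N(T x) + n(N x). -/

import Mathlib

open RealInnerProductSpace

/-- With `T x = P(J x)`, `N x = (id − P)(J x)` for `x ∈ W` and
`n u = (id − P)(J u)` for `u ∈ W⊥`, one has `p·N x = N(T x) + n(N x)` for every `x ∈ W`. -/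
theorem N_formula {V : Type*} [NormedAddCommGroup V] [InnerProductSpace ℝ V]
    [FiniteDimensional ℝ V]
    (p q : ℕ) (hp : 0 < p) (hq : 0 < q) (J : V →ₗ[ℝ] V)
    (hJ2 : ∀ x : V, J (J x) = (p : ℝ) • J x + (q : ℝ) • x)
    (hsym : ∀ x y : V, ⟪J x, y⟫ = ⟪x, J y⟫)
    (W : Submodule ℝ V)
    (T : V → V) (hT : ∀ x : V, T x = (Submodule.orthogonalProjectionOnto W (J x) : V))
    (N : V → V) (hN : ∀ x : V, N x = J x - (Submodule.orthogonalProjectionOnto W (J x) : V))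
    (n : V → V) (hn : ∀ u : V, n u = J u - (Submodule.orthogonalProjectionOnto W (J u) : V)) :
    ∀ x ∈ W, (p : ℝ) • N x = N (T x) + n (N x) := by
  intro x hx
  have hPx : ((Submodule.orthogonalProjectionOnto W x : V)) = x :=
    Submodule.starProjection_eq_self_iff.mpr hx
  simp only [hN, hn, hT, map_sub, map_add, map_smul, Submodule.coe_sub,
    Submodule.coe_add, Submodule.coe_smul, hJ2, hPx]
  module
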